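/- Let G be the Artin group on generators u, u_1 with the single relation (uu_1)^{k} = (u_1 u)^{k} (i.e., the dihedral Artin group with label 2k, k ≥ 2), and let χ : G → ℝ be the homomorphism with χ(u) = 1, χ(u_1) = −1. Then N = ker χ is generated by the conjugates x_j = u^j (u u_1) u^{−j}, j ∈ ℤ. -/

import Mathlib

/-- The single relation `(u u₁)^k (u₁ u)^{-k}` of the dihedral Artin group with label `2k`,
where `u` is `of false` and `u₁` is `of true`. -/
def dihedralArtinRels (k : ℕ) : Set (FreeGroup Bool) :=
  {(FreeGroup.of false * FreeGroup.of true) ^ k *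
    ((FreeGroup.of true * FreeGroup.of false) ^ k)⁻¹}

theorem kernel_generated_by_conjugates (k : ℕ) (hk : 2 ≤ k)
    (χ : PresentedGroup (dihedralArtinRels k) →* Multiplicative ℝ)
    (hu : χ (PresentedGroup.of false) = Multiplicative.ofAdd (1 : ℝ))
    (hu1 : χ (PresentedGroup.of true) = Multiplicative.ofAdd (-1 : ℝ)) :
    χ.ker = Subgroup.closure
      {g : PresentedGroup (dihedralArtinRels k) | ∃ j : ℤ,
        g = (PresentedGroup.of false) ^ j *
            (PresentedGroup.of false * PresentedGroup.of true) *
            (PresentedGroup.of false) ^ (-j)} := by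
  set G := PresentedGroup (dihedralArtinRels k) with hG
  set u : G := PresentedGroup.of false with hudef
  set v : G := PresentedGroup.of true with hvdef
  set S : Set G := {g : G | ∃ j : ℤ, g = u ^ j * (u * v) * u ^ (-j)} with hSdef
  set H : Subgroup G := Subgroup.closure S with hHdef
  -- the integer-valued character φ
  have hrel : ∀ r ∈ dihedralArtinRels k,
      FreeGroup.lift (fun b : Bool => if b then Multiplicative.ofAdd (-1 : ℤ)
        else Multiplicative.ofAdd (1 : ℤ)) r = 1 := by
    intro r hr
    simp only [dihedralArtinRels, Set.mem_singleton_iff] at hr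
    subst hr
    simp only [map_mul, map_pow, map_inv, FreeGroup.lift_apply_of, Bool.false_eq_true, if_true,
      if_false]
    have : (Multiplicative.ofAdd (1 : ℤ) * Multiplicative.ofAdd (-1 : ℤ)) = 1 := by
      rw [← ofAdd_add]; norm_num
    rw [this]
    have : (Multiplicative.ofAdd (-1 : ℤ) * Multiplicative.ofAdd (1 : ℤ)) = 1 := by
      rw [← ofAdd_add]; norm_num
    rw [this]
    simp
  set φ : G →* Multiplicative ℤ := PresentedGroup.toGroup hrel with hφdef
  have hφu : φ u = Multiplicative.ofAdd (1 : ℤ) := by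
    rw [hφdef, hudef]
    rw [PresentedGroup.toGroup.of]
    simp
  have hφv : φ v = Multiplicative.ofAdd (-1 : ℤ) := by
    rw [hφdef, hvdef]
    rw [PresentedGroup.toGroup.of]
    simp
  -- χ factors through φ
  set ψ : Multiplicative ℤ →* Multiplicative ℝ :=
    AddMonoidHom.toMultiplicative (Int.castAddHom ℝ) with hψdef
  have hfact : χ = ψ.comp φ := by
    apply PresentedGroup.ext
    intro b
    cases b
    · rw [← hudef]
      simp [hu, hφu, hψdef]
    · rw [← hvdef]
      simp [hu1, hφv, hψdef]
  have hker : ∀ g : G, χ g = 1 ↔ Multiplicative.toAdd (φ g) = 0 := by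
    intro g
    rw [hfact]
    simp only [MonoidHom.comp_apply, hψdef]
    constructor
    · intro h
      have : ((Multiplicative.toAdd (φ g) : ℤ) : ℝ) = 0 := by
        have := congrArg Multiplicative.toAdd h
        simpa using this
      exact_mod_cast this
    · intro h
      have : φ g = 1 := by
        have := congrArg Multiplicative.ofAdd h
        simpa using this
      rw [this]; simp
  -- membership of the generators
  have hSmem : ∀ j : ℤ, u ^ j * (u * v) * u ^ (-j) ∈ H := by
    intro j
    exact Subgroup.subset_closure ⟨j, rfl⟩
  -- conjugation by u preserves H
  set e : G ≃* G := MulAut.conj u with hedef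
  have he : ∀ j : ℤ, e (u ^ j * (u * v) * u ^ (-j)) = u ^ (j + 1) * (u * v) * u ^ (-(j + 1)) := by
    intro j
    simp only [hedef, MulAut.conj_apply]
    group
  have hmap : H.map e.toMonoidHom = H := by
    apply le_antisymm
    · rw [hHdef, MonoidHom.map_closure]
      apply Subgroup.closure_le _ |>.2
      rintro x ⟨y, ⟨j, rfl⟩, rfl⟩
      refine Subgroup.subset_closure ⟨j + 1, ?_⟩
      show e (u ^ j * (u * v) * u ^ (-j)) = u ^ (j+1) * (u * v) * u ^ (-(j+1))
      exact he j
    · rw [hHdef]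
      apply Subgroup.closure_le _ |>.2
      rintro x ⟨j, rfl⟩
      refine ⟨u ^ (j - 1) * (u * v) * u ^ (-(j - 1)), Subgroup.subset_closure ⟨j - 1, rfl⟩, ?_⟩
      show e _ = _
      rw [he (j - 1)]
      norm_num
  have hconj : ∀ h : G, h ∈ H ↔ u * h * u⁻¹ ∈ H := by
    intro h
    constructor
    · intro hh
      rw [← hmap]
      exact ⟨h, hh, rfl⟩
    · intro hh
      rw [← hmap] at hh
      rw [Subgroup.mem_map_equiv] at hh
      simpa [hedef, mul_assoc] using hh
  have hx0 : u * v ∈ H := by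
    have := hSmem 0
    simpa using this
  -- H is normal
  have hnorm : H.Normal := by
    rw [← Subgroup.normalizer_eq_top_iff]
    rw [eq_top_iff]
    intro g _
    refine PresentedGroup.generated_by _ _ ?_ g
    intro b
    cases b
    · rw [← hudef, Subgroup.mem_normalizer_iff]
      exact hconj
    · rw [← hvdef, Subgroup.mem_normalizer_iff]
      intro h
      have h1 : h ∈ H ↔ (u * v) * h * (u * v)⁻¹ ∈ H := by
        constructor
        · intro hh; exact mul_mem (mul_mem hx0 hh) (inv_mem hx0)
        · intro hh
          have : (u * v)⁻¹ * ((u * v) * h * (u * v)⁻¹) * (u * v) ∈ H :=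
            mul_mem (mul_mem (inv_mem hx0) hh) hx0
          simpa [mul_assoc] using this
      have h2 : ∀ y : G, y ∈ H ↔ u⁻¹ * y * u ∈ H := by
        intro y
        rw [hconj (u⁻¹ * y * u)]
        constructor
        · intro hy; convert hy using 1; group
        · intro hy; convert hy using 1; group
      rw [h1, h2]
      constructor
      · intro hh; convert hh using 1; group
      · intro hh; convert hh using 1; group
  -- the subgroup of elements g with g * u^{-deg g} ∈ H
  set T : Subgroup G :=
    { carrier := {g : G | g * u ^ (-(Multiplicative.toAdd (φ g))) ∈ H}
      one_mem' := by
        simp only [Set.mem_setOf_eq, map_one, toAdd_one, neg_zero, zpow_zero, mul_one]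
        exact one_mem H
      mul_mem' := by
        intro a b ha hb
        simp only [Set.mem_setOf_eq] at ha hb ⊢
        rw [map_mul, toAdd_mul]
        set m := Multiplicative.toAdd (φ a)
        set n := Multiplicative.toAdd (φ b)
        have key : a * b * u ^ (-(m + n)) =
            (a * u ^ (-m)) * (u ^ m * (b * u ^ (-n)) * (u ^ m)⁻¹) := by
          group
        rw [key]
        exact mul_mem ha (hnorm.conj_mem _ hb _)
      inv_mem' := by
        intro a ha
        simp only [Set.mem_setOf_eq] at ha ⊢
        rw [map_inv, toAdd_inv]
        set m := Multiplicative.toAdd (φ a)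
        have key : a⁻¹ * u ^ (-(-m)) = a⁻¹ * (a * u ^ (-m))⁻¹ * (a⁻¹)⁻¹ := by
          group
        rw [key]
        exact hnorm.conj_mem _ (inv_mem ha) _ } with hTdef
  have hT : ∀ g : G, g ∈ T := by
    refine fun g => PresentedGroup.generated_by _ _ ?_ g
    intro b
    cases b
    · show u * u ^ (-(Multiplicative.toAdd (φ u))) ∈ H
      rw [hφu]
      simpa using one_mem H
    · show v * u ^ (-(Multiplicative.toAdd (φ v))) ∈ H
      rw [hφv]
      have := hSmem (-1)
      have hv1 : u ^ (-1 : ℤ) * (u * v) * u ^ (-(-1) : ℤ) = v * u ^ (-(-1 : ℤ)) := by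
        group
      rw [hv1] at this
      simpa using this
  -- conclude
  apply le_antisymm
  · intro g hg
    have hg1 : χ g = 1 := hg
    have h0 : Multiplicative.toAdd (φ g) = 0 := (hker g).1 hg1
    have := hT g
    simp only [hTdef, Subgroup.mem_mk, Set.mem_setOf_eq, h0] at this
    simpa [h0] using this
  · apply Subgroup.closure_le _ |>.2
    rintro x ⟨j, rfl⟩
    show χ _ = 1
    rw [map_mul, map_mul, map_mul, map_zpow, map_zpow, hu, hu1]
    apply Multiplicative.toAdd.injective
    simp only [toAdd_mul, toAdd_zpow, toAdd_ofAdd, toAdd_one, zsmul_eq_mul]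
    push_cast
    ring
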